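/- Let Σ_θ be (N+1)×(N+1) positive definite, μ_i ∈ ℝ^(N+1), γ_i > 0 for i ∈ ℕ, and J(t) = trace((Σ_θ⁻¹ + Σ_{i=1}^{t} γ_i⁻¹ μ_i μ_iᵀ)⁻¹). If there exists a unit vector v ∈ ℝ^(N+1) such that Σ_{i=1}^{∞} γ_i⁻¹ (vᵀ μ_i)² < ∞, then lim inf_{t→∞} J(t) > 0. -/

import Mathlib

open Matrix Filter

section aux

variable {m : Type*} [Fintype m] [DecidableEq m]

open scoped MatrixOrder in
noncomputable def Matrix.PosSemidef.sqrt {M : Matrix m m ℝ} (_ : M.PosSemidef) :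
    Matrix m m ℝ := CFC.sqrt M

open scoped MatrixOrder in
theorem Matrix.PosSemidef.posSemidef_sqrt {M : Matrix m m ℝ} (hM : M.PosSemidef) :
    hM.sqrt.PosSemidef := (CFC.sqrt_nonneg M).posSemidef

open scoped MatrixOrder in
theorem Matrix.PosSemidef.sqrt_mul_self {M : Matrix m m ℝ} (hM : M.PosSemidef) :
    hM.sqrt * hM.sqrt = M := CFC.sqrt_mul_sqrt_self M hM.nonneg

lemma cs_dot (a b : m → ℝ) : (a ⬝ᵥ b) ^ 2 ≤ (a ⬝ᵥ a) * (b ⬝ᵥ b) := by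
  simpa [dotProduct, sq] using Finset.sum_mul_sq_le_sq_mul_sq Finset.univ a b

lemma dot_symm_mulVec {B : Matrix m m ℝ} (hB : Bᵀ = B) (x y : m → ℝ) :
    x ⬝ᵥ B *ᵥ y = (B *ᵥ x) ⬝ᵥ y := by
  rw [dotProduct_mulVec, ← mulVec_transpose, hB]

lemma quad_sqrt {M : Matrix m m ℝ} (hM : M.PosSemidef) (x : m → ℝ) :
    x ⬝ᵥ M *ᵥ x = (hM.sqrt *ᵥ x) ⬝ᵥ (hM.sqrt *ᵥ x) := by
  have hBs : (hM.sqrt)ᵀ = hM.sqrt := by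
    have := hM.posSemidef_sqrt.isHermitian
    simpa [Matrix.IsHermitian, Matrix.conjTranspose_eq_transpose_of_trivial] using this
  conv_lhs => rw [← hM.sqrt_mul_self]
  rw [← mulVec_mulVec, dot_symm_mulVec hBs]

lemma quad_le_trace {M : Matrix m m ℝ} (hM : M.PosSemidef) (x : m → ℝ) :
    x ⬝ᵥ M *ᵥ x ≤ M.trace * (x ⬝ᵥ x) := by
  set B := hM.sqrt with hBdef
  have hBs : Bᵀ = B := by
    have := hM.posSemidef_sqrt.isHermitian
    simpa [Matrix.IsHermitian, Matrix.conjTranspose_eq_transpose_of_trivial] using this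
  have htr : M.trace = ∑ i, ∑ j, (B i j) ^ 2 := by
    conv_lhs => rw [← hM.sqrt_mul_self]
    rw [Matrix.trace]
    refine Finset.sum_congr rfl fun i _ => ?_
    simp only [Matrix.diag, Matrix.mul_apply]
    refine Finset.sum_congr rfl fun j _ => ?_
    have h := congrFun (congrFun hBs i) j
    rw [Matrix.transpose_apply] at h
    rw [← hBdef, h, sq]
  rw [quad_sqrt hM x, htr]
  calc (B *ᵥ x) ⬝ᵥ (B *ᵥ x) = ∑ i, (∑ j, B i j * x j) ^ 2 := by
        simp [dotProduct, Matrix.mulVec, sq]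
    _ ≤ ∑ i, (∑ j, (B i j) ^ 2) * (x ⬝ᵥ x) := by
        refine Finset.sum_le_sum fun i _ => ?_
        have := Finset.sum_mul_sq_le_sq_mul_sq Finset.univ (fun j => B i j) x
        simpa [dotProduct, sq] using this
    _ = (∑ i, ∑ j, (B i j) ^ 2) * (x ⬝ᵥ x) := by rw [Finset.sum_mul]

lemma cs_posdef {A : Matrix m m ℝ} (hA : A.PosDef) (x y : m → ℝ) :
    (x ⬝ᵥ y) ^ 2 ≤ (x ⬝ᵥ A *ᵥ x) * (y ⬝ᵥ A⁻¹ *ᵥ y) := by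
  set B := hA.posSemidef.sqrt with hBdef
  have hBs : Bᵀ = B := by
    have := hA.posSemidef.posSemidef_sqrt.isHermitian
    simpa [Matrix.IsHermitian, Matrix.conjTranspose_eq_transpose_of_trivial] using this
  have hBB : B * B = A := hA.posSemidef.sqrt_mul_self
  have hdetA : A.det ≠ 0 := hA.det_pos.ne'
  have hdetB : IsUnit B.det := by
    have : B.det * B.det = A.det := by rw [← Matrix.det_mul, hBB]
    exact isUnit_iff_ne_zero.mpr (fun h => hdetA (by rw [← this, h, zero_mul]))
  have hBinv : B * B⁻¹ = 1 := Matrix.mul_nonsing_inv B hdetB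
  have hBinvs : (B⁻¹)ᵀ = B⁻¹ := by rw [Matrix.transpose_nonsing_inv, hBs]
  have hAinv : A⁻¹ = B⁻¹ * B⁻¹ := by rw [← hBB, Matrix.mul_inv_rev]
  have hxy : x ⬝ᵥ y = (B *ᵥ x) ⬝ᵥ (B⁻¹ *ᵥ y) := by
    rw [← dot_symm_mulVec hBs, mulVec_mulVec, hBinv, one_mulVec]
  have h1 : (B *ᵥ x) ⬝ᵥ (B *ᵥ x) = x ⬝ᵥ A *ᵥ x := by
    rw [← dot_symm_mulVec hBs, mulVec_mulVec, hBB]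
  have h2 : (B⁻¹ *ᵥ y) ⬝ᵥ (B⁻¹ *ᵥ y) = y ⬝ᵥ A⁻¹ *ᵥ y := by
    rw [← dot_symm_mulVec hBinvs, mulVec_mulVec, ← hAinv]
  rw [hxy, ← h1, ← h2]
  exact cs_dot _ _

lemma smul_vecMulVec_mulVec (c : ℝ) (w x : m → ℝ) :
    (c • vecMulVec w w) *ᵥ x = (c * (w ⬝ᵥ x)) • w := by
  ext i
  simp only [Matrix.mulVec, dotProduct, Matrix.smul_apply, vecMulVec_apply, smul_eq_mul,
    Pi.smul_apply]
  rw [Finset.mul_sum, Finset.sum_mul]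
  exact Finset.sum_congr rfl fun j _ => by ring

lemma quad_smul_vecMulVec (c : ℝ) (w x : m → ℝ) :
    x ⬝ᵥ (c • vecMulVec w w) *ᵥ x = c * (w ⬝ᵥ x) ^ 2 := by
  rw [smul_vecMulVec_mulVec, dotProduct_smul, smul_eq_mul, sq, dotProduct_comm x w]
  ring

lemma dot_self_nonneg (a : m → ℝ) : 0 ≤ a ⬝ᵥ a :=
  Finset.sum_nonneg fun i _ => mul_self_nonneg _

lemma psd_smul_vecMulVec {c : ℝ} (hc : 0 ≤ c) (w : m → ℝ) :
    (c • vecMulVec w w).PosSemidef := by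
  refine Matrix.PosSemidef.of_dotProduct_mulVec_nonneg ?_ ?_
  · show _ = _
    ext i j
    simp [Matrix.conjTranspose_apply, vecMulVec_apply, mul_comm]
  · intro x
    have : (star x : m → ℝ) = x := by ext i; simp
    rw [this, quad_smul_vecMulVec]
    positivity

lemma inv_quad_le {A : Matrix m m ℝ} (hA : A.PosDef) {c : ℝ} (hc : 0 < c)
    (h : ∀ y, c * (y ⬝ᵥ y) ≤ y ⬝ᵥ A *ᵥ y) (x : m → ℝ) :
    x ⬝ᵥ A⁻¹ *ᵥ x ≤ c⁻¹ * (x ⬝ᵥ x) := by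
  set y := A⁻¹ *ᵥ x with hy
  have hxy : A *ᵥ y = x := by
    rw [hy, mulVec_mulVec, Matrix.mul_nonsing_inv A (isUnit_iff_ne_zero.mpr hA.det_pos.ne'),
      one_mulVec]
  set t := x ⬝ᵥ y with ht
  have ht0 : 0 ≤ t := by
    have := hA.inv.posSemidef.dotProduct_mulVec_nonneg x
    have hsx : (star x : m → ℝ) = x := by ext i; simp
    rw [hsx] at this
    simpa [ht, hy] using this
  have hct : c * (y ⬝ᵥ y) ≤ t := by
    have h2 := h y
    rw [hxy] at h2
    rw [ht, dotProduct_comm x y]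
    exact h2
  have hcs : t ^ 2 ≤ (x ⬝ᵥ x) * (y ⬝ᵥ y) := cs_dot x y
  have hx0 : 0 ≤ x ⬝ᵥ x := dot_self_nonneg x
  have key : c * t ≤ x ⬝ᵥ x := by
    rcases eq_or_lt_of_le ht0 with h0 | hpos
    · rw [← h0, mul_zero]; exact hx0
    · have h1 : c * t ^ 2 ≤ (x ⬝ᵥ x) * t :=
        calc c * t ^ 2 ≤ c * ((x ⬝ᵥ x) * (y ⬝ᵥ y)) := by
              exact mul_le_mul_of_nonneg_left hcs hc.le
          _ = (x ⬝ᵥ x) * (c * (y ⬝ᵥ y)) := by ring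
          _ ≤ (x ⬝ᵥ x) * t := mul_le_mul_of_nonneg_left hct hx0
      have : (c * t) * t ≤ (x ⬝ᵥ x) * t := by nlinarith
      exact le_of_mul_le_mul_right this hpos
  calc x ⬝ᵥ A⁻¹ *ᵥ x = t := rfl
    _ = c⁻¹ * (c * t) := by field_simp
    _ ≤ c⁻¹ * (x ⬝ᵥ x) := mul_le_mul_of_nonneg_left key (by positivity)

lemma coercive {S : Matrix m m ℝ} (hS : S.PosDef) (y : m → ℝ) :
    (S.trace)⁻¹ * (y ⬝ᵥ y) ≤ y ⬝ᵥ S⁻¹ *ᵥ y := by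
  rcases isEmpty_or_nonempty m with hmne | hmne
  · have : y ⬝ᵥ y = 0 := by
      simp [dotProduct]
    rw [this, mul_zero]
    have h0 := hS.inv.posSemidef.dotProduct_mulVec_nonneg y
    have hsy : (star y : m → ℝ) = y := by ext i; simp
    rw [hsy] at h0
    simpa using h0
  · have htr : 0 < S.trace := by
      have hdiag : ∀ i, 0 < S i i := fun i => by
        have hne : (Pi.single i 1 : m → ℝ) ≠ 0 := by
          intro h
          have := congrFun h i
          simp at this
        have := hS.dotProduct_mulVec_pos hne
        have hsx : (star (Pi.single i 1) : m → ℝ) = Pi.single i 1 := by ext k; simp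
        rw [hsx] at this
        simpa [Matrix.mulVec_single, single_dotProduct] using this
      exact Finset.sum_pos (fun i _ => hdiag i) Finset.univ_nonempty
    have hcs := cs_posdef hS y y
    have hub := quad_le_trace hS.posSemidef y
    have hy0 : 0 ≤ y ⬝ᵥ y := dot_self_nonneg y
    have hinv0 : 0 ≤ y ⬝ᵥ S⁻¹ *ᵥ y := by
      have := hS.inv.posSemidef.dotProduct_mulVec_nonneg y
      have hsy : (star y : m → ℝ) = y := by ext i; simp
      rw [hsy] at this
      simpa using this
    rcases eq_or_lt_of_le hy0 with h0 | hpos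
    · rw [← h0, mul_zero]; exact hinv0
    · rw [inv_mul_le_iff₀ htr]
      nlinarith

end aux

theorem stmt_6 (N : ℕ)
    (S : Matrix (Fin (N + 1)) (Fin (N + 1)) ℝ) (hS : S.PosDef)
    (μ : ℕ → Fin (N + 1) → ℝ) (γ : ℕ → ℝ) (hγ : ∀ i, 0 < γ i)
    (J : ℕ → ℝ)
    (hJ : ∀ t, J t =
      ((S⁻¹ + ∑ i ∈ Finset.Icc 1 t,
        (γ i)⁻¹ • Matrix.vecMulVec (μ i) (μ i))⁻¹).trace)
    (v : Fin (N + 1) → ℝ) (hv : ∑ j, (v j) ^ 2 = 1)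
    (hsum : Summable (fun i => (γ i)⁻¹ * (v ⬝ᵥ μ i) ^ 2)) :
    0 < Filter.liminf J Filter.atTop := by
  classical
  -- the matrices
  set M : ℕ → Matrix (Fin (N + 1)) (Fin (N + 1)) ℝ := fun t =>
    S⁻¹ + ∑ i ∈ Finset.Icc 1 t, (γ i)⁻¹ • Matrix.vecMulVec (μ i) (μ i) with hM
  have hMpsd : ∀ t, (∑ i ∈ Finset.Icc 1 t,
      (γ i)⁻¹ • Matrix.vecMulVec (μ i) (μ i)).PosSemidef := fun t => by
    refine Finset.sum_induction _ _ (fun a b ha hb => ha.add hb) Matrix.PosSemidef.zero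
      (fun i _ => psd_smul_vecMulVec (inv_nonneg.mpr (hγ i).le) (μ i))
  have hA : ∀ t, (M t).PosDef := fun t => (hS.inv).add_posSemidef (hMpsd t)
  -- the limit sum and constants
  set T : ℝ := ∑' i, (γ i)⁻¹ * (v ⬝ᵥ μ i) ^ 2 with hT
  have hT0 : 0 ≤ T := tsum_nonneg fun i => mul_nonneg (inv_nonneg.mpr (hγ i).le) (sq_nonneg _)
  have hvv : v ⬝ᵥ v = 1 := by
    rw [dotProduct]
    rw [← hv]
    exact Finset.sum_congr rfl fun j _ => (sq (v j)).symm
  have hvne : v ≠ 0 := by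
    intro h
    rw [h] at hvv
    simp [dotProduct] at hvv
  have hvSinv : 0 < v ⬝ᵥ S⁻¹ *ᵥ v := by
    have := hS.inv.dotProduct_mulVec_pos hvne
    have hsv : (star v : Fin (N + 1) → ℝ) = v := by ext i; simp
    rw [hsv] at this
    simpa using this
  set c0 : ℝ := v ⬝ᵥ S⁻¹ *ᵥ v + T with hc0
  have hc0pos : 0 < c0 := by positivity
  -- quadratic form of M t at v is bounded by c0
  have hquadv : ∀ t, v ⬝ᵥ (M t) *ᵥ v ≤ c0 := by
    intro t
    have key : ∀ s : Finset ℕ,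
        v ⬝ᵥ (∑ i ∈ s, (γ i)⁻¹ • Matrix.vecMulVec (μ i) (μ i)) *ᵥ v
          = ∑ i ∈ s, (γ i)⁻¹ * (v ⬝ᵥ μ i) ^ 2 := by
      intro s
      induction s using Finset.induction with
      | empty => simp
      | @insert a s ha ih =>
        rw [Finset.sum_insert ha, Finset.sum_insert ha, Matrix.add_mulVec, dotProduct_add,
          ih, quad_smul_vecMulVec, dotProduct_comm (μ a) v]
    have hexp : v ⬝ᵥ (M t) *ᵥ v
        = v ⬝ᵥ S⁻¹ *ᵥ v + ∑ i ∈ Finset.Icc 1 t, (γ i)⁻¹ * (v ⬝ᵥ μ i) ^ 2 := by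
      rw [hM, Matrix.add_mulVec, dotProduct_add, key]
    rw [hexp, hc0]
    gcongr
    exact Summable.sum_le_tsum _ (fun i _ => mul_nonneg (inv_nonneg.mpr (hγ i).le) (sq_nonneg _)) hsum
  -- coercivity of M t
  have htrS : 0 < S.trace := by
    have hdiag : ∀ i, 0 < S i i := fun i => by
      have hne : (Pi.single i 1 : Fin (N + 1) → ℝ) ≠ 0 := by
        intro h
        have := congrFun h i
        simp at this
      have := hS.dotProduct_mulVec_pos hne
      have hsx : (star (Pi.single i 1) : Fin (N + 1) → ℝ) = Pi.single i 1 := by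
        ext k; simp
      rw [hsx] at this
      simpa [Matrix.mulVec_single, single_dotProduct] using this
    exact Finset.sum_pos (fun i _ => hdiag i) Finset.univ_nonempty
  have hcoer : ∀ t y, (S.trace)⁻¹ * (y ⬝ᵥ y) ≤ y ⬝ᵥ (M t) *ᵥ y := by
    intro t y
    have h1 := coercive hS y
    have h2 : 0 ≤ y ⬝ᵥ (∑ i ∈ Finset.Icc 1 t,
        (γ i)⁻¹ • Matrix.vecMulVec (μ i) (μ i)) *ᵥ y := by
      have := (hMpsd t).dotProduct_mulVec_nonneg y
      have hsy : (star y : Fin (N + 1) → ℝ) = y := by ext i; simp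
      rw [hsy] at this
      simpa using this
    rw [hM]
    rw [Matrix.add_mulVec, dotProduct_add]
    linarith
  -- upper bound for J
  have hJub : ∀ t, J t ≤ (N + 1 : ℝ) * S.trace := by
    intro t
    have hub : ∀ x : Fin (N + 1) → ℝ, x ⬝ᵥ (M t)⁻¹ *ᵥ x ≤ S.trace * (x ⬝ᵥ x) := by
      intro x
      have := inv_quad_le (hA t) (c := (S.trace)⁻¹) (by positivity) (hcoer t) x
      rwa [inv_inv] at this
    have hdiag : ∀ j : Fin (N + 1), (M t)⁻¹ j j ≤ S.trace := by
      intro j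
      have h1 := hub (Pi.single j 1)
      have h2 : (Pi.single j 1 : Fin (N + 1) → ℝ) ⬝ᵥ (M t)⁻¹ *ᵥ (Pi.single j 1) = (M t)⁻¹ j j := by
        simp [Matrix.mulVec_single, single_dotProduct]
      have h3 : (Pi.single j 1 : Fin (N + 1) → ℝ) ⬝ᵥ (Pi.single j 1) = 1 := by
        simp [single_dotProduct, Pi.single_apply]
      rw [h2, h3, mul_one] at h1
      exact h1
    rw [hJ t]
    calc (M t)⁻¹.trace = ∑ j, (M t)⁻¹ j j := rfl
      _ ≤ ∑ _j : Fin (N + 1), S.trace := Finset.sum_le_sum fun j _ => hdiag j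
      _ = (N + 1 : ℝ) * S.trace := by simp [Finset.card_univ]
  -- lower bound for J
  have hJlb : ∀ t, c0⁻¹ ≤ J t := by
    intro t
    have hquad : c0⁻¹ ≤ v ⬝ᵥ (M t)⁻¹ *ᵥ v := by
      have hcs := cs_posdef (hA t) v v
      rw [hvv, one_pow] at hcs
      have hvq := hquadv t
      have hinv0 : 0 ≤ v ⬝ᵥ (M t)⁻¹ *ᵥ v := by
        have := (hA t).inv.posSemidef.dotProduct_mulVec_nonneg v
        have hsv : (star v : Fin (N + 1) → ℝ) = v := by ext i; simp
        rw [hsv] at this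
        simpa using this
      have h1 : (1 : ℝ) ≤ c0 * (v ⬝ᵥ (M t)⁻¹ *ᵥ v) :=
        le_trans hcs (mul_le_mul_of_nonneg_right hvq hinv0)
      calc c0⁻¹ = c0⁻¹ * 1 := (mul_one _).symm
        _ ≤ c0⁻¹ * (c0 * (v ⬝ᵥ (M t)⁻¹ *ᵥ v)) :=
            mul_le_mul_of_nonneg_left h1 (by positivity)
        _ = v ⬝ᵥ (M t)⁻¹ *ᵥ v := by
            rw [← mul_assoc, inv_mul_cancel₀ hc0pos.ne', one_mul]
    have htrace : v ⬝ᵥ (M t)⁻¹ *ᵥ v ≤ (M t)⁻¹.trace := by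
      have := quad_le_trace (hA t).inv.posSemidef v
      rwa [hvv, mul_one] at this
    rw [hJ t]
    linarith
  -- conclude
  have hbdd : IsBoundedUnder (· ≤ ·) atTop J := ⟨(N + 1 : ℝ) * S.trace,
    Filter.eventually_atTop.mpr ⟨0, fun t _ => hJub t⟩⟩
  have hcb : IsCoboundedUnder (· ≥ ·) atTop J := hbdd.isCoboundedUnder_ge
  have : c0⁻¹ ≤ liminf J atTop :=
    le_liminf_of_le hcb (Filter.Eventually.of_forall hJlb)
  calc (0 : ℝ) < c0⁻¹ := by positivity
    _ ≤ liminf J atTop := this
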